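/- In the bicrossproduct H = kM ⋉ k(G), the antipode S(s⊗δ_u) = (s◁u)^i ⊗ δ_{(s▷u)^i} reverses the product: S((s⊗δ_u)(t⊗δ_v)) = S(t⊗δ_v)S(s⊗δ_u), and reverses the coproduct: τΔS = (S⊗S)Δ. -/

import Mathlib

/-- Data of an almost group: a binary operation, an `i` operation, and a subset `J`. -/
structure AlmostGroupData (G : Type*) where
  mul : G → G → G
  inv : G → G
  J : Set G

/-- The axioms of an almost group (Definition 2.1). -/
structure IsAlmostGroup {G : Type*} (D : AlmostGroupData G) : Prop where
  mul_assoc : ∀ a b c, D.mul (D.mul a b) c = D.mul a (D.mul b c)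
  inv_bijective : Function.Bijective D.inv
  J_mul_closed : ∀ a ∈ D.J, ∀ b ∈ D.J, D.mul a b ∈ D.J
  J_inv_closed : ∀ a ∈ D.J, D.inv a ∈ D.J
  inv_mul : ∀ a b, D.inv (D.mul a b) = D.mul (D.inv b) (D.inv a)
  J_central : ∀ j ∈ D.J, ∀ g, D.mul j g = D.mul g j
  mul_inv_comm : ∀ g, D.mul g (D.inv g) = D.mul (D.inv g) g
  mul_inv_mem : ∀ g, D.mul g (D.inv g) ∈ D.J
  inv_inv : ∀ g, D.inv (D.inv g) = g

/-- Data of a matched pair of almost groups: two almost groups and two actions. -/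
structure MatchedPairData (G M : Type*) where
  DG : AlmostGroupData G
  DM : AlmostGroupData M
  act : M → G → G      -- ▷ : M × G → G
  coact : M → G → M    -- ◁ : M × G → M

/-- The axioms of a matched pair of almost groups (Definition 4.1). -/
structure IsMatchedPair {G M : Type*} (P : MatchedPairData G M) : Prop where
  almostGroup_G : IsAlmostGroup P.DG
  almostGroup_M : IsAlmostGroup P.DM
  coact_mul : ∀ s u v, P.coact s (P.DG.mul u v) = P.coact (P.coact s u) v
  mul_coact : ∀ s t u, P.coact (P.DM.mul s t) u =
      P.DM.mul (P.coact s (P.act t u)) (P.coact t u)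
  mul_act : ∀ s t u, P.act (P.DM.mul s t) u = P.act s (P.act t u)
  act_mul : ∀ s u v, P.act s (P.DG.mul u v) =
      P.DG.mul (P.act s u) (P.act (P.coact s u) v)
  inv_act : ∀ s u, P.act (P.DM.inv (P.coact s u)) (P.DG.inv (P.act s u)) = P.DG.inv u
  inv_coact : ∀ s u, P.coact (P.DM.inv (P.coact s u)) (P.DG.inv (P.act s u)) = P.DM.inv s
  actJM : ∀ j ∈ P.DM.J, ∀ u, P.act j u = u
  coactJM : ∀ j ∈ P.DM.J, ∀ u, P.coact j u = j
  actJG : ∀ s, ∀ j ∈ P.DG.J, P.act s j = j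
  coactJG : ∀ s, ∀ j ∈ P.DG.J, P.coact s j = s

variable {G M k : Type*} [Fintype G] [Fintype M] [DecidableEq G] [DecidableEq M] [Field k]
variable (P : MatchedPairData G M)

/-- The product of `H = kM ⋉ k(G)`, given on the basis by
`(s ⊗ δ_u)(t ⊗ δ_v) = δ_{u, t ▷ v} (st ⊗ δ_v)`.  Here `H` is modelled as `M × G → k`,
with `(s, u)` indexing the basis vector `s ⊗ δ_u`. -/
def mulH (F K : M × G → k) : M × G → k := fun p =>
  ∑ s : M, ∑ t : M, if P.DM.mul s t = p.1 then F (s, P.act t p.2) * K (t, p.2) else 0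

/-- The coproduct of `H = kM ⋉ k(G)`, given on the basis by
`Δ(s ⊗ δ_u) = Σ_{xy=u} (s ⊗ δ_x) ⊗ ((s ◁ x) ⊗ δ_y)`.  `H ⊗ H` is modelled as
`(M × G) × (M × G) → k`. -/
def DeltaH (F : M × G → k) : (M × G) × (M × G) → k := fun q =>
  if q.2.1 = P.coact q.1.1 q.1.2 then F (q.1.1, P.DG.mul q.1.2 q.2.2) else 0

/-- The antipode on basis elements: `S(s ⊗ δ_u) = (s ◁ u)^i ⊗ δ_{(s ▷ u)^i}`. -/
def bS (b : M × G) : M × G :=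
  (P.DM.inv (P.coact b.1 b.2), P.DG.inv (P.act b.1 b.2))

/-- The antipode of `H = kM ⋉ k(G)`, the linear extension of `bS`. -/
def SH (F : M × G → k) : M × G → k := fun p =>
  ∑ b : M × G, if bS P b = p then F b else 0

namespace BicrossAux

variable {G M k : Type*} [Fintype G] [Fintype M] [DecidableEq G] [DecidableEq M] [Field k]
variable (P : MatchedPairData G M)

lemma bS_bS (hP : IsMatchedPair P) (b : M × G) : bS P (bS P b) = b := by
  obtain ⟨s, u⟩ := b
  simp only [bS]
  rw [hP.inv_coact, hP.inv_act, hP.almostGroup_M.inv_inv, hP.almostGroup_G.inv_inv]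

lemma SH_apply (hP : IsMatchedPair P) (F : M × G → k) (p : M × G) :
    SH P F p = F (bS P p) := by
  unfold SH
  rw [Finset.sum_eq_single (bS P p)]
  · rw [if_pos (bS_bS P hP p)]
  · intro b _ hb
    rw [if_neg]
    intro h
    exact hb (by rw [← h, bS_bS P hP])
  · simp

/-- The reindexing map for the product-reversal. -/
def Phi (w : G) : M × M → M × M := fun x =>
  (P.DM.inv (P.coact x.2 w), P.DM.inv (P.coact x.1 (P.act x.2 w)))

lemma Phi_mul (hP : IsMatchedPair P) (w : G) (x : M × M) :
    P.DM.mul (Phi P w x).1 (Phi P w x).2 =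
      P.DM.inv (P.coact (P.DM.mul x.1 x.2) w) := by
  obtain ⟨s, t⟩ := x
  simp only [Phi]
  rw [← hP.almostGroup_M.inv_mul, hP.mul_coact]

lemma Phi_comp (hP : IsMatchedPair P) (a : M) (w : G) (x : M × M)
    (h : P.DM.mul x.1 x.2 = a) :
    Phi P (P.DG.inv (P.act a w)) (Phi P w x) = x := by
  obtain ⟨s, t⟩ := x
  have hw : P.DG.inv (P.act a w) = P.DG.inv (P.act s (P.act t w)) := by
    rw [← hP.mul_act, h]
  simp only [Phi, hw]
  rw [hP.inv_coact, hP.almostGroup_M.inv_inv, hP.inv_act, hP.inv_coact,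
    hP.almostGroup_M.inv_inv]

lemma bS_base (hP : IsMatchedPair P) (a : M) (w : G) :
    P.DM.inv (P.coact (P.DM.inv (P.coact a w)) (P.DG.inv (P.act a w))) = a ∧
    P.DG.inv (P.act (P.DM.inv (P.coact a w)) (P.DG.inv (P.act a w))) = w := by
  constructor
  · rw [hP.inv_coact, hP.almostGroup_M.inv_inv]
  · rw [hP.inv_act, hP.almostGroup_G.inv_inv]

lemma key (hP : IsMatchedPair P) (F K : M × G → k) (a : M) (w : G) :
    (∑ s : M, ∑ t : M, if P.DM.mul s t = P.DM.inv (P.coact a w) then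
        F (s, P.act t (P.DG.inv (P.act a w))) * K (t, P.DG.inv (P.act a w)) else 0)
    = ∑ s : M, ∑ t : M, if P.DM.mul s t = a then
        K (bS P (s, P.act t w)) * F (bS P (t, w)) else 0 := by
  rw [← Finset.sum_product', ← Finset.sum_product', Finset.univ_product_univ]
  rw [← Finset.sum_filter, ← Finset.sum_filter]
  symm
  refine Finset.sum_nbij' (Phi P w) (Phi P (P.DG.inv (P.act a w))) ?_ ?_ ?_ ?_ ?_
  · intro x hx
    simp only [Finset.mem_filter, Finset.mem_univ, true_and] at hx ⊢
    rw [Phi_mul P hP, hx]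
  · intro y hy
    simp only [Finset.mem_filter, Finset.mem_univ, true_and] at hy ⊢
    rw [Phi_mul P hP, hy, hP.inv_coact, hP.almostGroup_M.inv_inv]
  · intro x hx
    simp only [Finset.mem_filter, Finset.mem_univ, true_and] at hx
    exact Phi_comp P hP a w x hx
  · intro y hy
    simp only [Finset.mem_filter, Finset.mem_univ, true_and] at hy
    have h2 := (bS_base P hP a w).2
    have := Phi_comp P hP (P.DM.inv (P.coact a w)) (P.DG.inv (P.act a w)) y hy
    rw [h2] at this
    exact this
  · intro x hx
    simp only [Finset.mem_filter, Finset.mem_univ, true_and] at hx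
    obtain ⟨s, t⟩ := x
    simp only at hx
    simp only [Phi, bS]
    have hw : P.DG.inv (P.act a w) = P.DG.inv (P.act s (P.act t w)) := by
      rw [← hP.mul_act, hx]
    rw [hw, hP.inv_act, mul_comm]

end BicrossAux

open BicrossAux

/-- In the bicrossproduct `H = kM ⋉ k(G)`, the antipode
`S(s ⊗ δ_u) = (s ◁ u)^i ⊗ δ_{(s ▷ u)^i}` reverses the product, `S(FK) = S(K)S(F)`,
and reverses the coproduct, `τ Δ S = (S ⊗ S) Δ`. -/
theorem bicross_antipode_reverses (hP : IsMatchedPair P) :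
    (∀ F K : M × G → k, SH P (mulH P F K) = mulH P (SH P K) (SH P F)) ∧
    (∀ (F : M × G → k) (p q : M × G),
      DeltaH P (SH P F) (q, p) =
        ∑ a : M × G, ∑ b : M × G,
          if bS P a = p ∧ bS P b = q then DeltaH P F (a, b) else 0) := by
  constructor
  · intro F K
    funext p
    obtain ⟨a, w⟩ := p
    rw [SH_apply P hP]
    simp only [mulH, bS, SH_apply P hP]
    exact key P hP F K a w
  · intro F p q
    have hRHS : (∑ a : M × G, ∑ b : M × G,
        if bS P a = p ∧ bS P b = q then DeltaH P F (a, b) else 0)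
        = DeltaH P F (bS P p, bS P q) := by
      rw [Finset.sum_eq_single (bS P p)]
      · rw [Finset.sum_eq_single (bS P q)]
        · rw [if_pos ⟨bS_bS P hP p, bS_bS P hP q⟩]
        · intro b _ hb
          rw [if_neg]
          rintro ⟨-, h2⟩
          exact hb (by rw [← h2, bS_bS P hP])
        · simp
      · intro x _ hx
        refine Finset.sum_eq_zero fun b _ => ?_
        rw [if_neg]
        rintro ⟨h1, -⟩
        exact hx (by rw [← h1, bS_bS P hP])
      · simp
    rw [hRHS]
    obtain ⟨s, u⟩ := q
    obtain ⟨m, v⟩ := p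
    have hinv : Function.Injective P.DM.inv :=
      Function.LeftInverse.injective hP.almostGroup_M.inv_inv
    simp only [DeltaH, bS, SH_apply P hP]
    simp only [hP.inv_coact m v]
    by_cases hc : m = P.coact s u
    · subst hc
      rw [if_pos rfl, if_pos rfl]
      rw [hP.coact_mul, hP.act_mul, hP.almostGroup_G.inv_mul]
    · rw [if_neg hc, if_neg (fun h => hc (hinv h).symm)]
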